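/- For a linear code U with trivial hull, generator matrix G, and parity check matrix H (so that H·Hᵀ is also invertible), one has Σ_U + Σ_{U⊥} = I_n, where Σ_U = Gᵀ(G·Gᵀ)⁻¹G and Σ_{U⊥} = Hᵀ(H·Hᵀ)⁻¹H. -/

import Mathlib

open Matrix

/-- The orthogonal complement (dual code) of a linear code `U ⊆ F^n` with respect to the
standard bilinear form `⟨x, y⟩ = ∑ i, x i * y i`. -/
def dualCode {F : Type*} [Field F] {n : ℕ} (U : Submodule F (Fin n → F)) :
    Submodule F (Fin n → F) where
  carrier := {z | ∀ u ∈ U, ∑ i, u i * z i = 0}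
  add_mem' := by
    intro a b ha hb u hu
    have h1 := ha u hu
    have h2 := hb u hu
    simp only [Set.mem_setOf_eq] at *
    calc ∑ i, u i * (a + b) i = (∑ i, u i * a i) + ∑ i, u i * b i := by
          rw [← Finset.sum_add_distrib]
          exact Finset.sum_congr rfl fun i _ => by simp [mul_add]
      _ = 0 := by rw [h1, h2, add_zero]
  zero_mem' := by
    intro u hu
    simp
  smul_mem' := by
    intro c a ha u hu
    have h := ha u hu
    simp only [Set.mem_setOf_eq] at *
    calc ∑ i, u i * (c • a) i = c * ∑ i, u i * a i := by
          rw [Finset.mul_sum]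
          exact Finset.sum_congr rfl fun i _ => by simp [smul_eq_mul]; ring
      _ = 0 := by rw [h, mul_zero]


/-- For a linear code `U` with trivial hull, generator matrix `G`,
and parity check matrix `H`, one has `Σ_U + Σ_{U⊥} = 1`, where
`Σ_U = Gᵀ (G Gᵀ)⁻¹ G` and `Σ_{U⊥} = Hᵀ (H Hᵀ)⁻¹ H`. -/
theorem statement6 {F : Type*} [Field F] {n k : ℕ}
    (U : Submodule F (Fin n → F))
    (G : Matrix (Fin k) (Fin n) F) (H : Matrix (Fin (n - k)) (Fin n) F)
    (hGind : LinearIndependent F G)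
    (hGspan : Submodule.span F (Set.range G) = U)
    (hHind : LinearIndependent F H)
    (hHspan : Submodule.span F (Set.range H) = dualCode U)
    (hhull : U ⊓ dualCode U = ⊥) :
    Gᵀ * (G * Gᵀ)⁻¹ * G + Hᵀ * (H * Hᵀ)⁻¹ * H = 1 := by
  classical
  classical
  set D := dualCode U with hDdef
  have hDmem : ∀ z, z ∈ D ↔ ∀ u ∈ U, ∑ i, u i * z i = 0 := fun z => Iff.rfl
  have hGU : ∀ j, G j ∈ U := fun j => by
    rw [← hGspan]; exact Submodule.subset_span ⟨j, rfl⟩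
  have hHD : ∀ i, H i ∈ D := fun i => by
    rw [← hHspan]; exact Submodule.subset_span ⟨i, rfl⟩
  -- representation of span members
  have hrep : ∀ {m : ℕ} (M : Matrix (Fin m) (Fin n) F) (c : Fin m → F),
      (∑ j, c j • M j) = Mᵀ *ᵥ c := by
    intro m M c
    funext i
    simp [mulVec, dotProduct, Finset.sum_apply, mul_comm]
  have hUmem : ∀ x ∈ U, ∃ c : Fin k → F, x = Gᵀ *ᵥ c := by
    intro x hx
    rw [← hGspan] at hx
    obtain ⟨c, hc⟩ := Submodule.mem_span_range_iff_exists_fun F |>.mp hx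
    exact ⟨c, by rw [← hc, hrep]⟩
  have hDmem' : ∀ x ∈ D, ∃ c : Fin (n-k) → F, x = Hᵀ *ᵥ c := by
    intro x hx
    rw [← hHspan] at hx
    obtain ⟨c, hc⟩ := Submodule.mem_span_range_iff_exists_fun F |>.mp hx
    exact ⟨c, by rw [← hc, hrep]⟩
  -- top
  have hkn : k ≤ n := by
    have := hGind.fintype_card_le_finrank
    simpa using this
  have hfU : Module.finrank F U = k := by
    rw [← hGspan, finrank_span_eq_card hGind]; simp
  have hfD : Module.finrank F D = n - k := by
    rw [← hHspan, finrank_span_eq_card hHind]; simp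
  have htop : U ⊔ D = ⊤ := by
    apply Submodule.eq_top_of_finrank_eq
    have h1 := Submodule.finrank_sup_add_finrank_inf_eq U D
    rw [hhull, hfU, hfD] at h1
    simp only [finrank_bot, add_zero] at h1
    rw [h1]
    simp [Nat.add_sub_cancel' hkn]
  -- key vanishing lemma
  have hvanish : ∀ v : Fin n → F, (∀ x ∈ U, x ⬝ᵥ v = 0) → (∀ x ∈ D, x ⬝ᵥ v = 0) →
      v = 0 := by
    intro v hU hDv
    let f : (Fin n → F) →ₗ[F] F :=
      { toFun := fun x => x ⬝ᵥ v
        map_add' := fun a b => add_dotProduct a b v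
        map_smul' := fun c a => smul_dotProduct c a v }
    have hker : U ⊔ D ≤ LinearMap.ker f := by
      apply sup_le
      · intro x hx; exact LinearMap.mem_ker.mpr (hU x hx)
      · intro x hx; exact LinearMap.mem_ker.mpr (hDv x hx)
    rw [htop] at hker
    funext i
    have := LinearMap.mem_ker.mp (hker (Submodule.mem_top (x := Pi.single i 1)))
    simpa [f, dotProduct, Pi.single_apply] using this
  -- orthogonality H * Gᵀ = 0
  have hHG : H * Gᵀ = 0 := by
    ext i j
    have := (hDmem (H i)).mp (hHD i) (G j) (hGU j)
    simpa [Matrix.mul_apply, mul_comm] using this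
  have hGH : G * Hᵀ = 0 := by
    have := congrArg Matrix.transpose hHG
    simpa using this
  -- invertibility of A := G * Gᵀ
  have hAdet : (G * Gᵀ).det ≠ 0 := by
    intro h
    obtain ⟨c, hc0, hc⟩ := (Matrix.exists_mulVec_eq_zero_iff).mpr h
    have hGc : G *ᵥ (Gᵀ *ᵥ c) = 0 := by rw [mulVec_mulVec]; exact hc
    have hu0 : Gᵀ *ᵥ c = 0 := by
      apply hvanish
      · intro x hx
        obtain ⟨d, rfl⟩ := hUmem x hx
        rw [mulVec_transpose, ← Matrix.dotProduct_mulVec, hGc]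
        simp
      · intro x hx
        have := (hDmem x).mp hx (Gᵀ *ᵥ c) ?_
        · simpa [dotProduct, mul_comm] using this
        · rw [← hGspan]
          rw [← hrep]
          exact Submodule.sum_mem _ fun j _ => Submodule.smul_mem _ _
            (Submodule.subset_span ⟨j, rfl⟩)
    apply hc0
    have hsum : ∑ j, c j • G j = 0 := by rw [hrep]; exact hu0
    exact funext fun j => (Fintype.linearIndependent_iff.mp hGind c hsum) j
  have hBdet : (H * Hᵀ).det ≠ 0 := by
    intro h
    obtain ⟨c, hc0, hc⟩ := (Matrix.exists_mulVec_eq_zero_iff).mpr h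
    have hHc : H *ᵥ (Hᵀ *ᵥ c) = 0 := by rw [mulVec_mulVec]; exact hc
    have hwD : Hᵀ *ᵥ c ∈ D := by
      rw [← hHspan, ← hrep]
      exact Submodule.sum_mem _ fun j _ => Submodule.smul_mem _ _
        (Submodule.subset_span ⟨j, rfl⟩)
    have hu0 : Hᵀ *ᵥ c = 0 := by
      apply hvanish
      · intro x hx
        have := (hDmem _).mp hwD x hx
        simpa [dotProduct] using this
      · intro x hx
        obtain ⟨d, rfl⟩ := hDmem' x hx
        rw [mulVec_transpose, ← Matrix.dotProduct_mulVec, hHc]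
        simp
    apply hc0
    have hsum : ∑ j, c j • H j = 0 := by rw [hrep]; exact hu0
    exact funext fun j => (Fintype.linearIndependent_iff.mp hHind c hsum) j
  -- the matrix identities
  set M := Gᵀ * (G * Gᵀ)⁻¹ * G + Hᵀ * (H * Hᵀ)⁻¹ * H with hM
  have hAinv : (G * Gᵀ)⁻¹ * (G * Gᵀ) = 1 := nonsing_inv_mul _ (Ne.isUnit hAdet)
  have hBinv : (H * Hᵀ)⁻¹ * (H * Hᵀ) = 1 := nonsing_inv_mul _ (Ne.isUnit hBdet)
  have hMG : M * Gᵀ = Gᵀ := by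
    rw [hM, Matrix.add_mul]
    rw [Matrix.mul_assoc (Gᵀ * (G * Gᵀ)⁻¹) G Gᵀ, Matrix.mul_assoc Gᵀ _ _, hAinv,
        Matrix.mul_assoc (Hᵀ * (H * Hᵀ)⁻¹) H Gᵀ, hHG]
    simp
  have hMH : M * Hᵀ = Hᵀ := by
    rw [hM, Matrix.add_mul]
    rw [Matrix.mul_assoc (Hᵀ * (H * Hᵀ)⁻¹) H Hᵀ, Matrix.mul_assoc Hᵀ _ _, hBinv,
        Matrix.mul_assoc (Gᵀ * (G * Gᵀ)⁻¹) G Hᵀ, hGH]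
    simp
  have hMx : ∀ x : Fin n → F, M *ᵥ x = x := by
    intro x
    have hx : x ∈ U ⊔ D := htop ▸ Submodule.mem_top
    obtain ⟨u, hu, w, hw, rfl⟩ := Submodule.mem_sup.mp hx
    obtain ⟨c, rfl⟩ := hUmem u hu
    obtain ⟨d, rfl⟩ := hDmem' w hw
    rw [mulVec_add, mulVec_mulVec, mulVec_mulVec, hMG, hMH]
  ext i j
  have := congrFun (hMx (Pi.single j 1)) i
  simpa [Pi.single_apply, Matrix.one_apply] using this
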